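/- Let G be a finite commutative group with |G| = q, and let A₁, A₂ ⊆ G be standard sets. Then λ(A₁ ∩ A₂) ≤ q · λ(A₁) · λ(A₂), λ⁺(A₁ ∩ A₂) ≤ q · λ⁺(A₁) · λ⁺(A₂), λ⁻(A₁ ∩ A₂) ≤ q · λ⁻(A₁) · λ⁺(A₂), and λ±(A₁ ∩ A₂) ≤ q · λ±(A₁) · λ⁺(A₂). -/

import Mathlib

open scoped Pointwise ComplexOrder

noncomputable section

def IsStandard {G : Type*} [AddCommGroup G] (A : Set G) : Prop :=
  A = -A ∧ (0 : G) ∈ A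

def Delta {G : Type*} [AddCommGroup G] (A : Set G) : ℕ :=
  sSup {n | ∃ B : Finset G, ((B : Set G) - (B : Set G)) ∩ A = {0} ∧ B.card = n}

def DeltaBar {G : Type*} [AddCommGroup G] (A : Set G) : ℕ :=
  sSup {n | ∃ B : Finset G, ((B : Set G) - (B : Set G)) ⊆ A ∧ B.card = n}

def deltaL {G : Type*} [AddCommGroup G] [Fintype G] (A : Set G) : ℝ :=
  (Delta A : ℝ) / (Fintype.card G : ℝ)

def deltaU {G : Type*} [AddCommGroup G] (A : Set G) : ℝ :=
  1 / (DeltaBar A : ℝ)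

def ftrans {G : Type*} [AddCommGroup G] [Fintype G] (f : G → ℝ) (γ : AddChar G Circle) : ℂ :=
  ∑ x, (γ x : ℂ) * (f x : ℂ)

def PosFT {G : Type*} [AddCommGroup G] [Fintype G] (f : G → ℝ) : Prop :=
  ∀ γ : AddChar G Circle, 0 ≤ ftrans f γ

def lamSet {G : Type*} [AddCommGroup G] [Fintype G] (S : Set (G → ℝ)) : Set ℝ :=
  {r | ∃ f ∈ S, PosFT f ∧ (∑ x, f x) ≠ 0 ∧ r = f 0 / ∑ x, f x}

def lam {G : Type*} [AddCommGroup G] [Fintype G] (A : Set G) : ℝ :=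
  sInf (lamSet {f | f ≠ 0 ∧ ∀ x ∉ A, f x = 0})

def lamMinus {G : Type*} [AddCommGroup G] [Fintype G] (A : Set G) : ℝ :=
  sInf (lamSet {f | f ≠ 0 ∧ ∀ x ∉ A, f x ≤ 0})

def lamPlus {G : Type*} [AddCommGroup G] [Fintype G] (A : Set G) : ℝ :=
  sInf (lamSet {f | f ≠ 0 ∧ (∀ x ∉ A, f x = 0) ∧ ∀ x ∈ A, 0 ≤ f x})

def lamPM {G : Type*} [AddCommGroup G] [Fintype G] (A : Set G) : ℝ :=
  sInf (lamSet {f | f ≠ 0 ∧ (∀ x ∉ A, f x ≤ 0) ∧ ∀ x ∈ A, 0 ≤ f x})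


namespace Stmt12Helpers
variable {G : Type*} [AddCommGroup G] [Fintype G]

instance : Finite (AddChar G Circle) :=
  Finite.of_equiv _ AddChar.circleEquivComplex.toEquiv.symm

noncomputable instance : Fintype (AddChar G Circle) := Fintype.ofFinite _

instance : Finite (AddChar G Circle) :=
  Finite.of_equiv _ AddChar.circleEquivComplex.toEquiv.symm

noncomputable instance : Fintype (AddChar G Circle) := Fintype.ofFinite _

open Classical in
lemma sumChar (x : G) : ∑ γ : AddChar G Circle, ((γ x : ℂ)) =
    if x = 0 then (Fintype.card G : ℂ) else 0 := by
  rw [← AddChar.sum_apply_eq_ite]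
  exact Fintype.sum_equiv AddChar.circleEquivComplex.toEquiv _ _ (fun γ => rfl)

open Classical in
lemma conv (f₁ f₂ : G → ℝ) (γ : AddChar G Circle) :
    (Fintype.card G : ℂ) * ftrans (fun x => f₁ x * f₂ x) γ =
      ∑ δ : AddChar G Circle, ftrans f₁ δ * ftrans f₂ (γ - δ) := by
  have key : ∀ (y x : G) (δ : AddChar G Circle),
      ((δ y : ℂ) * (f₁ y : ℂ)) * (((γ - δ) x : ℂ) * (f₂ x : ℂ)) =
      ((γ x : ℂ) * (f₁ y : ℂ) * (f₂ x : ℂ)) * ((δ (y - x) : ℂ)) := by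
    intro y x δ
    have h1 : ((γ - δ) x) = γ x * δ (-x) := AddChar.sub_apply γ δ x
    have h2 : δ (y - x) = δ y * δ (-x) := by
      rw [sub_eq_add_neg, AddChar.map_add_eq_mul]
    rw [h1, h2]
    push_cast
    ring
  symm
  calc ∑ δ : AddChar G Circle, ftrans f₁ δ * ftrans f₂ (γ - δ)
      = ∑ δ : AddChar G Circle, ∑ y, ∑ x,
          ((δ y : ℂ) * (f₁ y : ℂ)) * (((γ - δ) x : ℂ) * (f₂ x : ℂ)) := by
        simp [ftrans, Finset.sum_mul_sum]
    _ = ∑ y, ∑ x, ∑ δ : AddChar G Circle,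
          ((δ y : ℂ) * (f₁ y : ℂ)) * (((γ - δ) x : ℂ) * (f₂ x : ℂ)) := by
        rw [Finset.sum_comm]; exact Finset.sum_congr rfl fun y _ => Finset.sum_comm
    _ = ∑ y, ∑ x, ((γ x : ℂ) * (f₁ y : ℂ) * (f₂ x : ℂ)) *
          (if y - x = 0 then (Fintype.card G : ℂ) else 0) := by
        refine Finset.sum_congr rfl fun y _ => Finset.sum_congr rfl fun x _ => ?_
        rw [← sumChar, Finset.mul_sum]
        exact Finset.sum_congr rfl fun δ _ => key y x δ
    _ = (Fintype.card G : ℂ) * ftrans (fun x => f₁ x * f₂ x) γ := by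
        simp only [sub_eq_zero, mul_ite, mul_zero]
        rw [Finset.sum_comm]
        simp [ftrans, Finset.mul_sum]
        exact Finset.sum_congr rfl fun x _ => by ring

lemma ftrans_zero_char (f : G → ℝ) : ftrans f (0 : AddChar G Circle) = ((∑ x, f x : ℝ) : ℂ) := by
  simp [ftrans]

open Classical in
lemma inversion0 (f : G → ℝ) :
    ∑ γ : AddChar G Circle, ftrans f γ = (Fintype.card G : ℂ) * (f 0 : ℂ) := by
  simp only [ftrans]
  rw [Finset.sum_comm]
  have : ∀ x : G, ∑ γ : AddChar G Circle, (γ x : ℂ) * (f x : ℂ) =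
      (if x = 0 then (Fintype.card G : ℂ) else 0) * (f x : ℂ) := by
    intro x; rw [← Finset.sum_mul, sumChar]
  rw [Finset.sum_congr rfl fun x _ => this x]
  simp

lemma sum_pos_of_posft {f : G → ℝ} (hf : PosFT f) (hne : (∑ x, f x) ≠ 0) :
    0 < ∑ x, f x := by
  have h := hf 0
  rw [ftrans_zero_char] at h
  have : (0:ℝ) ≤ ∑ x, f x := by exact_mod_cast h
  exact lt_of_le_of_ne this (Ne.symm hne)

lemma apply_zero_ge {f : G → ℝ} (hf : PosFT f) :
    ((∑ x, f x : ℝ) : ℂ) ≤ (Fintype.card G : ℂ) * (f 0 : ℂ) := by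
  rw [← inversion0, ← ftrans_zero_char]
  exact Finset.single_le_sum (fun γ _ => hf γ) (Finset.mem_univ 0)

lemma apply_zero_pos {f : G → ℝ} (hf : PosFT f) (hne : (∑ x, f x) ≠ 0) :
    0 < f 0 := by
  have h := apply_zero_ge hf
  have h2 : (∑ x, f x : ℝ) ≤ (Fintype.card G : ℝ) * f 0 := by exact_mod_cast h
  have h3 := sum_pos_of_posft hf hne
  nlinarith [Fintype.card_pos (α := G), Nat.cast_pos (α := ℝ) |>.2 (Fintype.card_pos (α := G))]

lemma posft_mul {f₁ f₂ : G → ℝ} (h₁ : PosFT f₁) (h₂ : PosFT f₂) :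
    PosFT (fun x => f₁ x * f₂ x) := by
  intro γ
  have h := conv f₁ f₂ γ
  have hsum : 0 ≤ ∑ δ : AddChar G Circle, ftrans f₁ δ * ftrans f₂ (γ - δ) :=
    Finset.sum_nonneg fun δ _ => mul_nonneg (h₁ δ) (h₂ (γ - δ))
  rw [← h] at hsum
  have hq : ((Fintype.card G : ℂ))⁻¹ = (((Fintype.card G : ℝ))⁻¹ : ℂ) := by push_cast; ring
  have hinv : (0:ℂ) ≤ ((Fintype.card G : ℂ))⁻¹ := by
    rw [hq]
    exact_mod_cast inv_nonneg.2 (Nat.cast_nonneg _ : (0:ℝ) ≤ _)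
  have := mul_nonneg hinv hsum
  rwa [inv_mul_cancel_left₀ (by exact_mod_cast Fintype.card_ne_zero : (Fintype.card G : ℂ) ≠ 0)] at this

lemma sum_mul_ge {f₁ f₂ : G → ℝ} (h₁ : PosFT f₁) (h₂ : PosFT f₂) :
    ((∑ x, f₁ x) * (∑ x, f₂ x) : ℝ) ≤ (Fintype.card G : ℝ) * ∑ x, f₁ x * f₂ x := by
  have h := conv f₁ f₂ (0 : AddChar G Circle)
  have hterm : ftrans f₁ 0 * ftrans f₂ ((0:AddChar G Circle) - 0) ≤
      ∑ δ : AddChar G Circle, ftrans f₁ δ * ftrans f₂ ((0:AddChar G Circle) - δ) :=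
    Finset.single_le_sum (fun δ _ => mul_nonneg (h₁ δ) (h₂ _)) (Finset.mem_univ 0)
  rw [← h, sub_zero, ftrans_zero_char, ftrans_zero_char,
    ftrans_zero_char (fun x => f₁ x * f₂ x)] at hterm
  exact_mod_cast hterm

lemma lamSet_nonneg {S : Set (G → ℝ)} {r : ℝ} (hr : r ∈ lamSet S) : 0 ≤ r := by
  obtain ⟨f, _, hpos, hne, rfl⟩ := hr
  exact le_of_lt (div_pos (apply_zero_pos hpos hne) (sum_pos_of_posft hpos hne))

open Classical in
def delta0 : G → ℝ := fun x => if x = 0 then (1:ℝ) else 0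

lemma delta0_posft : PosFT (delta0 : G → ℝ) := by
  intro γ
  have : ftrans (delta0 : G → ℝ) γ = 1 := by
    simp only [ftrans, delta0]
    rw [Finset.sum_eq_single 0]
    · simp
    · intro b _ hb; simp [hb]
    · simp
  rw [this]; exact zero_le_one

lemma delta0_mem {Q : (G → ℝ) → Prop} (hQ : Q (delta0 : G → ℝ)) :
    (1:ℝ) ∈ lamSet {f : G → ℝ | f ≠ 0 ∧ Q f} := by
  have hsum : ∑ x, (delta0 : G → ℝ) x = 1 := by
    rw [Finset.sum_eq_single 0]
    · simp [delta0]
    · intro b _ hb; simp [delta0, hb]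
    · simp
  refine ⟨delta0, ⟨?_, hQ⟩, delta0_posft, by rw [hsum]; norm_num, by rw [hsum]; simp [delta0]⟩
  intro h
  have := congr_fun h 0
  simp [delta0] at this

lemma key (Q₁ Q₂ Q : (G → ℝ) → Prop)
    (hδ₁ : Q₁ (delta0 : G → ℝ))
    (hδ₂ : Q₂ (delta0 : G → ℝ))
    (hmul : ∀ f₁ f₂ : G → ℝ, Q₁ f₁ → Q₂ f₂ → Q (fun x => f₁ x * f₂ x)) :
    sInf (lamSet {f : G → ℝ | f ≠ 0 ∧ Q f}) ≤
      (Fintype.card G : ℝ) * sInf (lamSet {f : G → ℝ | f ≠ 0 ∧ Q₁ f}) *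
        sInf (lamSet {f : G → ℝ | f ≠ 0 ∧ Q₂ f}) := by
  set q : ℝ := (Fintype.card G : ℝ) with hqdef
  have hq : 0 < q := by positivity
  set L₁ := sInf (lamSet {f : G → ℝ | f ≠ 0 ∧ Q₁ f}) with hL₁
  set L₂ := sInf (lamSet {f : G → ℝ | f ≠ 0 ∧ Q₂ f}) with hL₂
  have hne₁ : (lamSet {f : G → ℝ | f ≠ 0 ∧ Q₁ f}).Nonempty := ⟨1, delta0_mem hδ₁⟩
  have hne₂ : (lamSet {f : G → ℝ | f ≠ 0 ∧ Q₂ f}).Nonempty := ⟨1, delta0_mem hδ₂⟩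
  have hbdd : ∀ S : Set (G → ℝ), BddBelow (lamSet S) :=
    fun S => ⟨0, fun r hr => lamSet_nonneg hr⟩
  have hL₁0 : 0 ≤ L₁ := le_csInf hne₁ fun r hr => lamSet_nonneg hr
  have hL₂0 : 0 ≤ L₂ := le_csInf hne₂ fun r hr => lamSet_nonneg hr
  have main : ∀ ε : ℝ, 0 < ε →
      sInf (lamSet {f : G → ℝ | f ≠ 0 ∧ Q f}) ≤ q * (L₁ + ε) * (L₂ + ε) := by
    intro ε hε
    obtain ⟨r₁, hr₁mem, hr₁⟩ := Real.lt_sInf_add_pos hne₁ hε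
    obtain ⟨r₂, hr₂mem, hr₂⟩ := Real.lt_sInf_add_pos hne₂ hε
    rw [← hL₁] at hr₁
    rw [← hL₂] at hr₂
    obtain ⟨f₁, ⟨hf₁ne, hf₁Q⟩, hf₁pos, hf₁sum, rfl⟩ := hr₁mem
    obtain ⟨f₂, ⟨hf₂ne, hf₂Q⟩, hf₂pos, hf₂sum, rfl⟩ := hr₂mem
    have ha₁ : 0 < ∑ x, f₁ x := sum_pos_of_posft hf₁pos hf₁sum
    have ha₂ : 0 < ∑ x, f₂ x := sum_pos_of_posft hf₂pos hf₂sum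
    have h01 : 0 < f₁ 0 := apply_zero_pos hf₁pos hf₁sum
    have h02 : 0 < f₂ 0 := apply_zero_pos hf₂pos hf₂sum
    set g : G → ℝ := fun x => f₁ x * f₂ x with hgdef
    have hgpos : PosFT g := posft_mul hf₁pos hf₂pos
    have hgsum : (∑ x, f₁ x) * (∑ x, f₂ x) / q ≤ ∑ x, g x := by
      rw [div_le_iff₀ hq] at *
      have := sum_mul_ge hf₁pos hf₂pos
      linarith [this]
    have hgsumpos : 0 < ∑ x, g x := lt_of_lt_of_le (by positivity) hgsum
    have hgne : g ≠ 0 := by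
      intro h
      have : g 0 = 0 := by rw [h]; rfl
      simp only [hgdef] at this
      nlinarith
    have hmem : g 0 / ∑ x, g x ∈ lamSet {f : G → ℝ | f ≠ 0 ∧ Q f} :=
      ⟨g, ⟨hgne, hmul f₁ f₂ hf₁Q hf₂Q⟩, hgpos, ne_of_gt hgsumpos, rfl⟩
    have step1 : sInf (lamSet {f : G → ℝ | f ≠ 0 ∧ Q f}) ≤ g 0 / ∑ x, g x :=
      csInf_le (hbdd _) hmem
    have hg0 : g 0 = f₁ 0 * f₂ 0 := rfl
    have step2 : g 0 / ∑ x, g x ≤ q * (f₁ 0 / ∑ x, f₁ x) * (f₂ 0 / ∑ x, f₂ x) := by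
      rw [hg0]
      have h1 : f₁ 0 * f₂ 0 / ∑ x, g x ≤ f₁ 0 * f₂ 0 / ((∑ x, f₁ x) * (∑ x, f₂ x) / q) :=
        div_le_div_of_nonneg_left (by positivity) (by positivity) hgsum
      have h2 : f₁ 0 * f₂ 0 / ((∑ x, f₁ x) * (∑ x, f₂ x) / q) =
          q * (f₁ 0 / ∑ x, f₁ x) * (f₂ 0 / ∑ x, f₂ x) := by
        field_simp
      linarith [h1, h2.symm.le]
    have step3 : q * (f₁ 0 / ∑ x, f₁ x) * (f₂ 0 / ∑ x, f₂ x) ≤ q * (L₁ + ε) * (L₂ + ε) := by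
      have p1 : 0 ≤ f₁ 0 / ∑ x, f₁ x := by positivity
      have p2 : 0 ≤ f₂ 0 / ∑ x, f₂ x := by positivity
      have hA : 0 ≤ q * (L₁ + ε) := mul_nonneg hq.le (by linarith)
      calc q * (f₁ 0 / ∑ x, f₁ x) * (f₂ 0 / ∑ x, f₂ x)
          ≤ q * (L₁ + ε) * (f₂ 0 / ∑ x, f₂ x) :=
            mul_le_mul_of_nonneg_right (mul_le_mul_of_nonneg_left hr₁.le hq.le) p2
        _ ≤ q * (L₁ + ε) * (L₂ + ε) := mul_le_mul_of_nonneg_left hr₂.le hA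
    linarith
  have cont : Filter.Tendsto (fun ε : ℝ => q * (L₁ + ε) * (L₂ + ε)) (nhdsWithin 0 (Set.Ioi 0))
      (nhds (q * L₁ * L₂)) := by
    have c : Continuous fun ε : ℝ => q * (L₁ + ε) * (L₂ + ε) := by continuity
    have := (c.tendsto 0).mono_left (nhdsWithin_le_nhds (s := Set.Ioi (0:ℝ)))
    simpa using this
  exact ge_of_tendsto cont (eventually_nhdsWithin_of_forall fun ε hε => main ε hε)

end Stmt12Helpers

open Stmt12Helpers

theorem stmt12 {G : Type*} [AddCommGroup G] [Fintype G]
    (A₁ A₂ : Set G) (h₁ : IsStandard A₁) (h₂ : IsStandard A₂) :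
    lam (A₁ ∩ A₂) ≤ (Fintype.card G : ℝ) * lam A₁ * lam A₂ ∧
    lamPlus (A₁ ∩ A₂) ≤ (Fintype.card G : ℝ) * lamPlus A₁ * lamPlus A₂ ∧
    lamMinus (A₁ ∩ A₂) ≤ (Fintype.card G : ℝ) * lamMinus A₁ * lamPlus A₂ ∧
    lamPM (A₁ ∩ A₂) ≤ (Fintype.card G : ℝ) * lamPM A₁ * lamPlus A₂ := by
  obtain ⟨_, h01⟩ := h₁
  obtain ⟨_, h02⟩ := h₂
  have hδz : ∀ (A : Set G), (0:G) ∈ A → ∀ x ∉ A, (delta0 : G → ℝ) x = 0 := by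
    intro A h0 x hx
    have hx0 : x ≠ 0 := fun h => hx (h ▸ h0)
    simp [delta0, hx0]
  have hδnn : ∀ x : G, 0 ≤ (delta0 : G → ℝ) x := by
    intro x; unfold delta0; split <;> norm_num
  have hδnp : ∀ (A : Set G), (0:G) ∈ A → ∀ x ∉ A, (delta0 : G → ℝ) x ≤ 0 :=
    fun A h0 x hx => (hδz A h0 x hx).le
  refine ⟨?_, ?_, ?_, ?_⟩
  · exact key (G := G) (fun f => ∀ x ∉ A₁, f x = 0) (fun f => ∀ x ∉ A₂, f x = 0)
      (fun f => ∀ x ∉ A₁ ∩ A₂, f x = 0) (hδz A₁ h01) (hδz A₂ h02)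
      (by
        intro f₁ f₂ hf₁ hf₂ x hx
        by_cases hx1 : x ∈ A₁
        · have hx2 : x ∉ A₂ := fun h => hx ⟨hx1, h⟩
          simp [hf₂ x hx2]
        · simp [hf₁ x hx1])
  · exact key (G := G) (fun f => (∀ x ∉ A₁, f x = 0) ∧ ∀ x ∈ A₁, 0 ≤ f x)
      (fun f => (∀ x ∉ A₂, f x = 0) ∧ ∀ x ∈ A₂, 0 ≤ f x)
      (fun f => (∀ x ∉ A₁ ∩ A₂, f x = 0) ∧ ∀ x ∈ A₁ ∩ A₂, 0 ≤ f x)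
      ⟨hδz A₁ h01, fun x _ => hδnn x⟩ ⟨hδz A₂ h02, fun x _ => hδnn x⟩
      (by
        intro f₁ f₂ hf₁ hf₂
        constructor
        · intro x hx
          by_cases hx1 : x ∈ A₁
          · have hx2 : x ∉ A₂ := fun h => hx ⟨hx1, h⟩
            simp [hf₂.1 x hx2]
          · simp [hf₁.1 x hx1]
        · exact fun x hx => mul_nonneg (hf₁.2 x hx.1) (hf₂.2 x hx.2))
  · exact key (G := G) (fun f => ∀ x ∉ A₁, f x ≤ 0)
      (fun f => (∀ x ∉ A₂, f x = 0) ∧ ∀ x ∈ A₂, 0 ≤ f x)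
      (fun f => ∀ x ∉ A₁ ∩ A₂, f x ≤ 0)
      (hδnp A₁ h01) ⟨hδz A₂ h02, fun x _ => hδnn x⟩
      (by
        intro f₁ f₂ hf₁ hf₂ x hx
        have h2 : 0 ≤ f₂ x := by
          by_cases h : x ∈ A₂
          · exact hf₂.2 x h
          · exact (hf₂.1 x h).ge
        by_cases hx1 : x ∈ A₁
        · have hx2 : x ∉ A₂ := fun h => hx ⟨hx1, h⟩
          simp [hf₂.1 x hx2]
        · show f₁ x * f₂ x ≤ 0
          nlinarith [hf₁ x hx1])
  · exact key (G := G) (fun f => (∀ x ∉ A₁, f x ≤ 0) ∧ ∀ x ∈ A₁, 0 ≤ f x)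
      (fun f => (∀ x ∉ A₂, f x = 0) ∧ ∀ x ∈ A₂, 0 ≤ f x)
      (fun f => (∀ x ∉ A₁ ∩ A₂, f x ≤ 0) ∧ ∀ x ∈ A₁ ∩ A₂, 0 ≤ f x)
      ⟨hδnp A₁ h01, fun x _ => hδnn x⟩ ⟨hδz A₂ h02, fun x _ => hδnn x⟩
      (by
        intro f₁ f₂ hf₁ hf₂
        constructor
        · intro x hx
          have h2 : 0 ≤ f₂ x := by
            by_cases h : x ∈ A₂
            · exact hf₂.2 x h
            · exact (hf₂.1 x h).ge
          by_cases hx1 : x ∈ A₁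
          · have hx2 : x ∉ A₂ := fun h => hx ⟨hx1, h⟩
            simp [hf₂.1 x hx2]
          · show f₁ x * f₂ x ≤ 0
            nlinarith [hf₁.1 x hx1]
        · exact fun x hx => mul_nonneg (hf₁.2 x hx.1) (hf₂.2 x hx.2))
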